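/- Let S be a bounded invertible operator on a Hilbert space with σ(S) ⊆ {Re z > 0}, and let S^{1/2} be the square root from the holomorphic functional calculus. Let T₁, T₂ be bounded operators from Hilbert spaces K₁, K₂ (with fundamental symmetries) into H with T_k T_k⁺ = S for k = 1,2. Then with U_k = S^{-1/2} T_k, the operator W = U₁⁺ U₂ satisfies W W⁺ = U₁⁺U₁, W⁺W = U₂⁺U₂, and T₁ W = T₂. -/
import Mathlib


open ContinuousLinearMap

theorem stmt14 {H K1 K2 : Type*}
    [NormedAddCommGroup H] [InnerProductSpace ℂ H] [CompleteSpace H]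
    [NormedAddCommGroup K1] [InnerProductSpace ℂ K1] [CompleteSpace K1]
    [NormedAddCommGroup K2] [InnerProductSpace ℂ K2] [CompleteSpace K2]
    -- fundamental symmetries on `H`, `K1`, `K2`
    (JH : H →L[ℂ] H) (J1 : K1 →L[ℂ] K1) (J2 : K2 →L[ℂ] K2)
    (hJHsa : IsSelfAdjoint JH) (hJHinv : JH ∘L JH = 1)
    (hJ1sa : IsSelfAdjoint J1) (hJ1inv : J1 ∘L J1 = 1)
    (hJ2sa : IsSelfAdjoint J2) (hJ2inv : J2 ∘L J2 = 1)
    (S : H →L[ℂ] H) (hSinv : IsUnit S)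
    (hs : ∀ z ∈ spectrum ℂ S, 0 < z.re)
    -- `P = S^{1/2}` from the holomorphic functional calculus: `P² = S`,
    -- spectrum in the sector `|arg| < π/4`, Krein self-adjoint; `Pinv = S^{-1/2}`
    (P Pinv : H →L[ℂ] H) (hPsq : P ∘L P = S)
    (hsP : ∀ z ∈ spectrum ℂ P, z ≠ 0 ∧ |z.arg| < Real.pi / 4)
    (hPKrein : JH ∘L P = adjoint P ∘L JH)
    (hPinv : P ∘L Pinv = 1 ∧ Pinv ∘L P = 1)
    -- synthesis operators with `T_k T_k⁺ = S`
    (T1 : K1 →L[ℂ] H) (T2 : K2 →L[ℂ] H)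
    (hT1 : T1 ∘L (J1 ∘L adjoint T1 ∘L JH) = S)
    (hT2 : T2 ∘L (J2 ∘L adjoint T2 ∘L JH) = S) :
    -- with `U_k = S^{-1/2} T_k` and `W = U₁⁺ U₂`:
    letI U1 : K1 →L[ℂ] H := Pinv ∘L T1
    letI U2 : K2 →L[ℂ] H := Pinv ∘L T2
    letI W : K2 →L[ℂ] K1 := (J1 ∘L adjoint U1 ∘L JH) ∘L U2
    W ∘L (J2 ∘L adjoint W ∘L J1) = (J1 ∘L adjoint U1 ∘L JH) ∘L U1 ∧
    (J2 ∘L adjoint W ∘L J1) ∘L W = (J2 ∘L adjoint U2 ∘L JH) ∘L U2 ∧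
    T1 ∘L W = T2 := by
  -- pointwise versions of the hypotheses
  have hP1 : ∀ x : H, P (Pinv x) = x := fun x => by
    have := congrArg (fun A : H →L[ℂ] H => A x) hPinv.1; simpa using this
  have hP2 : ∀ x : H, Pinv (P x) = x := fun x => by
    have := congrArg (fun A : H →L[ℂ] H => A x) hPinv.2; simpa using this
  have hJ1' : ∀ x : K1, J1 (J1 x) = x := fun x => by
    have := congrArg (fun A : K1 →L[ℂ] K1 => A x) hJ1inv; simpa using this
  have hJ2' : ∀ x : K2, J2 (J2 x) = x := fun x => by
    have := congrArg (fun A : K2 →L[ℂ] K2 => A x) hJ2inv; simpa using this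
  have hT1' : ∀ x : H, T1 (J1 (adjoint T1 (JH x))) = S x := fun x => by
    have := congrArg (fun A : H →L[ℂ] H => A x) hT1; simpa using this
  have hT2' : ∀ x : H, T2 (J2 (adjoint T2 (JH x))) = S x := fun x => by
    have := congrArg (fun A : H →L[ℂ] H => A x) hT2; simpa using this
  have hS' : ∀ x : H, S x = P (P x) := fun x => by
    have := congrArg (fun A : H →L[ℂ] H => A x) hPsq; simpa using this.symm
  -- Krein self-adjointness of `Pinv`: `(Pinv)* JH = JH Pinv`
  have h1op : adjoint Pinv ∘L adjoint P = 1 := by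
    rw [← adjoint_comp, hPinv.1, ← star_eq_adjoint, star_one]
  have h1 : ∀ x : H, adjoint Pinv (adjoint P x) = x := fun x => by
    have := congrArg (fun A : H →L[ℂ] H => A x) h1op; simpa using this
  have hPK : ∀ x : H, JH (P x) = adjoint P (JH x) := fun x => by
    have := congrArg (fun A : H →L[ℂ] H => A x) hPKrein; simpa using this
  have hK : ∀ x : H, adjoint Pinv (JH x) = JH (Pinv x) := fun x => by
    conv_lhs => rw [← hP1 x, hPK, h1]
  -- the co-isometry identities `U_k U_k⁺ = 1` (pointwise)
  have g1 : ∀ x : H, Pinv (T1 (J1 (adjoint T1 (JH (Pinv x))))) = x := fun x => by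
    rw [hT1', hS', hP2, hP1]
  have g2 : ∀ x : H, Pinv (T2 (J2 (adjoint T2 (JH (Pinv x))))) = x := fun x => by
    rw [hT2', hS', hP2, hP1]
  refine ⟨?_, ?_, ?_⟩
  · ext x
    simp only [comp_apply, adjoint_comp, adjoint_adjoint, hJHsa.adjoint_eq,
      hJ1sa.adjoint_eq, hJ2sa.adjoint_eq]
    simp only [comp_apply, hK, hJ1', hJ2', g2]
  · ext x
    simp only [comp_apply, adjoint_comp, adjoint_adjoint, hJHsa.adjoint_eq,
      hJ1sa.adjoint_eq, hJ2sa.adjoint_eq]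
    simp only [comp_apply, hK, hJ1', hJ2', g1]
  · ext x
    simp only [comp_apply, adjoint_comp, adjoint_adjoint, hJHsa.adjoint_eq,
      hJ1sa.adjoint_eq, hJ2sa.adjoint_eq]
    simp only [comp_apply, hK, hT1', hS', hP1]
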